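/- Let d be odd. Fix orientations on all maximal totally isotropic subspaces V and on their Q-orthogonal complements V^⊥ such that every f ∈ SO⁺(d+1,d) induces orientation-preserving isomorphisms V → f(V) and V^⊥ → f(V)^⊥. Define the positive wing V^⌐ = { v + x·e : v ∈ V, x ≥ 0 }, where e ∈ V^⊥ is any vector completing a direct basis of V to a direct basis of V^⊥. Then for any two transversal maximal totally isotropic subspaces V₍<₎ and V₍>₎, the positive wings intersect trivially: V₍<₎^⌐ ∩ V₍>₎^⌐ = {0}. -/

import Mathlib

open Module Filter Topology

noncomputable section

/-- `f` lies in the identity component `SO⁺(Q)` of the orthogonal group of `Q`: there is a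
(pointwise continuous) path of `Q`-preserving automorphisms from the identity to `f`. -/
def InSOplus {n : ℕ} (Q : QuadraticForm ℝ (Fin n → ℝ))
    (f : (Fin n → ℝ) ≃ₗ[ℝ] (Fin n → ℝ)) : Prop :=
  (∀ x, Q (f x) = Q x) ∧
  ∃ γ : ℝ → ((Fin n → ℝ) ≃ₗ[ℝ] (Fin n → ℝ)),
    (∀ t x, Q (γ t x) = Q x) ∧ γ 0 = LinearEquiv.refl ℝ (Fin n → ℝ) ∧ γ 1 = f ∧
    ∀ x, Continuous fun t => γ t x

namespace WingAux

variable {n : ℕ} (Q : QuadraticForm ℝ (Fin n → ℝ))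

/-- linear combination map into the model space -/
def Tmap {dd mm : ℕ} (P : Fin dd → (Fin n → ℝ)) (A B : Fin mm → (Fin n → ℝ)) :
    ((Fin dd → ℝ) × (Fin mm → ℂ)) →ₗ[ℝ] (Fin n → ℝ) where
  toFun p := (∑ i, p.1 i • P i) + ∑ j, ((p.2 j).re • A j + (p.2 j).im • B j)
  map_add' p q := by
    simp only [Pi.add_apply, Prod.fst_add, Prod.snd_add, Complex.add_re, Complex.add_im,
      add_smul, Finset.sum_add_distrib]
    abel
  map_smul' c p := by
    simp only [Prod.smul_fst, Prod.smul_snd, Pi.smul_apply, smul_eq_mul, Complex.smul_re,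
      Complex.smul_im, RingHom.id_apply, Finset.smul_sum, smul_add, smul_smul]

theorem Tmap_apply {dd mm : ℕ} (P : Fin dd → (Fin n → ℝ)) (A B : Fin mm → (Fin n → ℝ))
    (p : (Fin dd → ℝ) × (Fin mm → ℂ)) :
    Tmap P A B p = (∑ i, p.1 i • P i) + ∑ j, ((p.2 j).re • A j + (p.2 j).im • B j) := rfl

end WingAux

namespace WingAux

variable {n : ℕ} (Q : QuadraticForm ℝ (Fin n → ℝ))

theorem polar_sum_right {ι : Type*} (s : Finset ι) (z : Fin n → ℝ) (v : ι → (Fin n → ℝ)) :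
    QuadraticMap.polar Q z (∑ i ∈ s, v i) = ∑ i ∈ s, QuadraticMap.polar Q z (v i) := by
  simpa only [QuadraticMap.polarBilin_apply_apply] using map_sum (Q.polarBilin z) v s

theorem polar_Tmap {dd mm : ℕ} (P : Fin dd → (Fin n → ℝ)) (A B : Fin mm → (Fin n → ℝ))
    (p : (Fin dd → ℝ) × (Fin mm → ℂ)) (z : Fin n → ℝ) :
    QuadraticMap.polar Q z (Tmap P A B p)
      = (∑ i, p.1 i * QuadraticMap.polar Q z (P i))
        + ∑ j, ((p.2 j).re * QuadraticMap.polar Q z (A j)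
          + (p.2 j).im * QuadraticMap.polar Q z (B j)) := by
  rw [Tmap_apply, QuadraticMap.polar_add_right, polar_sum_right, polar_sum_right]
  congr 1
  · exact Finset.sum_congr rfl fun i _ => by rw [QuadraticMap.polar_smul_right]; rfl
  · exact Finset.sum_congr rfl fun j _ => by
      rw [QuadraticMap.polar_add_right, QuadraticMap.polar_smul_right,
        QuadraticMap.polar_smul_right]; rfl

end WingAux

namespace WingAux

variable {n : ℕ}

theorem exists_soplus {dd mm : ℕ} (hn : n = dd + 2 * mm)
    (Q : QuadraticForm ℝ (Fin n → ℝ)) (σ : ℝ) (hσ : σ ≠ 0)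
    (P : Fin dd → (Fin n → ℝ)) (A B : Fin mm → (Fin n → ℝ))
    (hPP : ∀ i j, QuadraticMap.polar Q (P i) (P j) = if i = j then -(2*σ) else 0)
    (hAA : ∀ i j, QuadraticMap.polar Q (A i) (A j) = if i = j then 2*σ else 0)
    (hBB : ∀ i j, QuadraticMap.polar Q (B i) (B j) = if i = j then 2*σ else 0)
    (hAB : ∀ i j, QuadraticMap.polar Q (A i) (B j) = 0)
    (hPA : ∀ i j, QuadraticMap.polar Q (P i) (A j) = 0)
    (hPB : ∀ i j, QuadraticMap.polar Q (P i) (B j) = 0) :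
    ∃ f : (Fin n → ℝ) ≃ₗ[ℝ] (Fin n → ℝ), InSOplus Q f ∧ (∀ i, f (P i) = P i) ∧
      (∀ j, f (A j) = -(A j)) ∧ (∀ j, f (B j) = -(B j)) ∧
      LinearMap.BilinForm.Nondegenerate Q.polarBilin := by
  classical
  set T : ((Fin dd → ℝ) × (Fin mm → ℂ)) →ₗ[ℝ] (Fin n → ℝ) := Tmap P A B with hT
  -- pairings of T p with the basis vectors
  have hAP : ∀ j i, QuadraticMap.polar Q (A j) (P i) = 0 := fun j i => by
    rw [QuadraticMap.polar_comm]; exact hPA i j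
  have hBP : ∀ j i, QuadraticMap.polar Q (B j) (P i) = 0 := fun j i => by
    rw [QuadraticMap.polar_comm]; exact hPB i j
  have hBA : ∀ i j, QuadraticMap.polar Q (B i) (A j) = 0 := fun i j => by
    rw [QuadraticMap.polar_comm]; exact hAB j i
  have hTP : ∀ (p : (Fin dd → ℝ) × (Fin mm → ℂ)) i,
      QuadraticMap.polar Q (T p) (P i) = -(2*σ) * p.1 i := by
    intro p i
    rw [QuadraticMap.polar_comm, polar_Tmap]
    rw [Finset.sum_eq_single i, Finset.sum_eq_zero]
    · rw [QuadraticMap.polar_comm _ (P i) (P i), hPP, if_pos rfl]; ring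
    · intro j _
      rw [QuadraticMap.polar_comm _ (P i) (A j), QuadraticMap.polar_comm _ (P i) (B j),
        hAP, hBP]; ring
    · intro j _ hji
      rw [QuadraticMap.polar_comm _ (P i) (P j), hPP, if_neg hji]; ring
    · intro h; exact absurd (Finset.mem_univ i) h
  have hTA : ∀ (p : (Fin dd → ℝ) × (Fin mm → ℂ)) j,
      QuadraticMap.polar Q (T p) (A j) = (2*σ) * (p.2 j).re := by
    intro p j
    rw [QuadraticMap.polar_comm, polar_Tmap]
    rw [Finset.sum_eq_zero, Finset.sum_eq_single j]
    · rw [QuadraticMap.polar_comm _ (A j) (A j), hAA, if_pos rfl,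
        QuadraticMap.polar_comm _ (A j) (B j), hBA]; ring
    · intro k _ hkj
      rw [QuadraticMap.polar_comm _ (A j) (A k), hAA, if_neg hkj,
        QuadraticMap.polar_comm _ (A j) (B k), hBA]; ring
    · intro h; exact absurd (Finset.mem_univ j) h
    · intro i _
      rw [QuadraticMap.polar_comm _ (A j) (P i), hPA]; ring
  have hTB : ∀ (p : (Fin dd → ℝ) × (Fin mm → ℂ)) j,
      QuadraticMap.polar Q (T p) (B j) = (2*σ) * (p.2 j).im := by
    intro p j
    rw [QuadraticMap.polar_comm, polar_Tmap]
    rw [Finset.sum_eq_zero, Finset.sum_eq_single j]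
    · rw [QuadraticMap.polar_comm _ (B j) (A j), hAB,
        QuadraticMap.polar_comm _ (B j) (B j), hBB, if_pos rfl]; ring
    · intro k _ hkj
      rw [QuadraticMap.polar_comm _ (B j) (A k), hAB,
        QuadraticMap.polar_comm _ (B j) (B k), hBB, if_neg hkj]; ring
    · intro h; exact absurd (Finset.mem_univ j) h
    · intro i _
      rw [QuadraticMap.polar_comm _ (B j) (P i), hPB]; ring
  -- value of Q on T p
  have hQT : ∀ p : (Fin dd → ℝ) × (Fin mm → ℂ),
      Q (T p) = σ * ((∑ j, Complex.normSq (p.2 j)) - ∑ i, p.1 i ^ 2) := by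
    intro p
    have hps := QuadraticMap.polar_self Q (T p)
    rw [show QuadraticMap.polar Q (T p) (T p)
        = QuadraticMap.polar Q (T p) (Tmap P A B p) from rfl, polar_Tmap] at hps
    simp only [hTP, hTA, hTB] at hps
    have h1 : ∑ i, p.1 i * (-(2*σ) * p.1 i) = -(2*σ) * ∑ i, p.1 i ^ 2 := by
      rw [Finset.mul_sum]; exact Finset.sum_congr rfl fun i _ => by ring
    have h2 : ∑ j, ((p.2 j).re * ((2*σ) * (p.2 j).re) + (p.2 j).im * ((2*σ) * (p.2 j).im))
        = (2*σ) * ∑ j, Complex.normSq (p.2 j) := by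
      rw [Finset.mul_sum]
      exact Finset.sum_congr rfl fun j _ => by rw [Complex.normSq_apply]; ring
    rw [h1, h2, two_smul] at hps
    linarith
  -- kernel characterization
  have hker : ∀ p : (Fin dd → ℝ) × (Fin mm → ℂ),
      (∀ z, QuadraticMap.polar Q (T p) z = 0) → p = 0 := by
    intro p hp
    have hne : -(2*σ) ≠ 0 := by intro h; apply hσ; linarith
    have hne2 : (2*σ) ≠ 0 := by intro h; apply hσ; linarith
    have h1 : ∀ i, p.1 i = 0 := by
      intro i
      have := hp (P i); rw [hTP] at this
      exact (mul_eq_zero.mp this).resolve_left hne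
    have h2 : ∀ j, p.2 j = 0 := by
      intro j
      have ha := hp (A j); rw [hTA] at ha
      have hb := hp (B j); rw [hTB] at hb
      have ha' := (mul_eq_zero.mp ha).resolve_left hne2
      have hb' := (mul_eq_zero.mp hb).resolve_left hne2
      exact Complex.ext ha' hb'
    have : p.1 = 0 := funext h1
    have : p.2 = 0 := funext h2
    exact Prod.ext (funext h1) (funext h2)
  have hTinj : Function.Injective T := by
    intro a b hab
    have : T (a - b) = 0 := by rw [map_sub, hab, sub_self]
    have := hker (a - b) (fun z => by
      rw [this, QuadraticMap.polar_zero_left])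
    rwa [sub_eq_zero] at this
  have hfr : finrank ℝ ((Fin dd → ℝ) × (Fin mm → ℂ)) = n := by
    rw [Module.finrank_prod]
    rw [Module.finrank_pi ℝ]
    rw [Module.finrank_pi_fintype ℝ]
    simp [Complex.finrank_real_complex, Finset.sum_const, hn]
    ring
  have hTsurj : Function.Surjective T := by
    rw [← LinearMap.range_eq_top]
    apply Submodule.eq_top_of_finrank_eq
    rw [LinearMap.finrank_range_of_inj hTinj, hfr]
    simp [Module.finrank_pi]
  set TE : ((Fin dd → ℝ) × (Fin mm → ℂ)) ≃ₗ[ℝ] (Fin n → ℝ) :=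
    LinearEquiv.ofBijective T ⟨hTinj, hTsurj⟩ with hTE
  have hTEapp : ∀ p, TE p = T p := fun p => rfl
  -- nondegeneracy
  have hnd : LinearMap.BilinForm.Nondegenerate Q.polarBilin := by
    have hL : LinearMap.SeparatingLeft Q.polarBilin := by
      intro x hx
      obtain ⟨p, rfl⟩ := hTsurj x
      rw [hker p (fun z => by
        have := hx z; rwa [QuadraticMap.polarBilin_apply_apply] at this), map_zero]
    refine ⟨hL, fun y hy => hL y fun z => ?_⟩
    have := hy z
    rw [QuadraticMap.polarBilin_apply_apply] at this ⊢
    rwa [QuadraticMap.polar_comm]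
  -- the rotation path
  set z : ℝ → ℂ := fun t => Complex.exp ((Real.pi * t : ℝ) * Complex.I) with hzdef
  have hz1 : ∀ t, Complex.normSq (z t) = 1 := by
    intro t
    rw [Complex.normSq_eq_norm_sq, Complex.norm_exp_ofReal_mul_I]
    norm_num
  have hzmul : ∀ t, z t * z (-t) = 1 := by
    intro t
    rw [hzdef]
    rw [← Complex.exp_add]
    rw [show ((Real.pi * t : ℝ) : ℂ) * Complex.I + ((Real.pi * -t : ℝ) : ℂ) * Complex.I = 0 by
      push_cast; ring]
    exact Complex.exp_zero
  have hz0 : z 0 = 1 := by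
    rw [hzdef]; norm_num
  have hz1' : z 1 = -1 := by
    rw [hzdef]; norm_num [Complex.exp_pi_mul_I]
  set rmap : ℂ → (((Fin dd → ℝ) × (Fin mm → ℂ)) →ₗ[ℝ] ((Fin dd → ℝ) × (Fin mm → ℂ))) :=
    fun c => LinearMap.prodMap LinearMap.id
      (LinearMap.pi (fun j => (LinearMap.mulLeft ℝ c).comp (LinearMap.proj j))) with hrmap
  have hrapp : ∀ c p, rmap c p = (p.1, fun j => c * p.2 j) := by
    intro c p; rfl
  have hrinv : ∀ t, (rmap (z t)).comp (rmap (z (-t))) = LinearMap.id := by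
    intro t
    apply LinearMap.ext
    intro p
    rw [LinearMap.comp_apply, hrapp, hrapp]
    refine Prod.ext rfl ?_
    funext j
    show z t * (z (-t) * p.2 j) = p.2 j
    rw [← mul_assoc, hzmul, one_mul]
  have hrinv' : ∀ t, (rmap (z (-t))).comp (rmap (z t)) = LinearMap.id := by
    intro t
    apply LinearMap.ext
    intro p
    rw [LinearMap.comp_apply, hrapp, hrapp]
    refine Prod.ext rfl ?_
    funext j
    show z (-t) * (z t * p.2 j) = p.2 j
    rw [← mul_assoc, mul_comm (z (-t)), hzmul, one_mul]
  set ρ : ℝ → (((Fin dd → ℝ) × (Fin mm → ℂ)) ≃ₗ[ℝ] ((Fin dd → ℝ) × (Fin mm → ℂ))) :=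
    fun t => LinearEquiv.ofLinear (rmap (z t)) (rmap (z (-t))) (hrinv t) (hrinv' t) with hρ
  have hρapp : ∀ t p, ρ t p = (p.1, fun j => z t * p.2 j) := fun t p => hrapp (z t) p
  set γ : ℝ → ((Fin n → ℝ) ≃ₗ[ℝ] (Fin n → ℝ)) :=
    fun t => (TE.symm.trans (ρ t)).trans TE with hγ
  have hγapp : ∀ t x, γ t x = TE (ρ t (TE.symm x)) := fun t x => rfl
  have hQγ : ∀ t x, Q (γ t x) = Q x := by
    intro t x
    rw [hγapp]
    set p := TE.symm x with hp
    have hxp : x = TE p := (TE.apply_symm_apply x).symm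
    rw [hxp, hTEapp, hTEapp, hQT, hQT, hρapp]
    simp only [Complex.normSq_mul, hz1, one_mul]
  have hγ0 : γ 0 = LinearEquiv.refl ℝ (Fin n → ℝ) := by
    apply LinearEquiv.ext
    intro x
    rw [hγapp, hρapp]
    simp only [hz0, one_mul]
    rw [show ((TE.symm x).1, fun j => (TE.symm x).2 j) = TE.symm x from rfl]
    exact TE.apply_symm_apply x
  -- single generators
  have hTsingleP : ∀ i, T (Pi.single i 1, 0) = P i := by
    intro i
    rw [hT, Tmap_apply]
    simp only [Prod.fst, Prod.snd, Pi.zero_apply, Complex.zero_re, Complex.zero_im,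
      zero_smul, add_zero, zero_add, Finset.sum_const_zero]
    rw [Finset.sum_eq_single i]
    · simp
    · intro j _ hji
      rw [Pi.single_apply, if_neg hji, zero_smul]
    · intro h; exact absurd (Finset.mem_univ i) h
  have hTsingleA : ∀ (j : Fin mm) (c : ℂ), T (0, Pi.single j c) = c.re • A j + c.im • B j := by
    intro j c
    rw [hT, Tmap_apply]
    simp only [Pi.zero_apply, zero_smul, Finset.sum_const_zero, zero_add]
    rw [Finset.sum_eq_single j]
    · simp
    · intro k _ hkj
      rw [Pi.single_apply, if_neg hkj]
      simp
    · intro h; exact absurd (Finset.mem_univ j) h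
  set f := γ 1 with hf
  have hρ1 : ∀ p : (Fin dd → ℝ) × (Fin mm → ℂ), ρ 1 p = (p.1, -p.2) := by
    intro p
    rw [hρapp]
    refine Prod.ext rfl ?_
    funext j
    show z 1 * p.2 j = (-p.2) j
    rw [hz1']
    simp
  have hfT : ∀ p : (Fin dd → ℝ) × (Fin mm → ℂ), f (T p) = T (p.1, -p.2) := by
    intro p
    rw [hf, hγapp]
    have : TE.symm (T p) = p := by
      apply TE.injective
      rw [TE.apply_symm_apply, hTEapp]
    rw [this, hρ1, hTEapp]
  have hfP : ∀ i, f (P i) = P i := by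
    intro i
    rw [← hTsingleP i, hfT]
    simp only [neg_zero]
  have hfA : ∀ j, f (A j) = -(A j) := by
    intro j
    have h1 : T (0, Pi.single j 1) = A j := by
      rw [hTsingleA]; simp
    have h2 : (-(Pi.single j 1) : Fin mm → ℂ) = Pi.single j (-1) := by
      funext k
      simp only [Pi.neg_apply, Pi.single_apply]
      split_ifs <;> simp
    have h0 := hfT (0, Pi.single j 1)
    rw [h1] at h0
    rw [h0]
    show T (0, -(Pi.single j 1)) = -(A j)
    rw [h2, hTsingleA]
    simp
  have hfB : ∀ j, f (B j) = -(B j) := by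
    intro j
    have h1 : T (0, Pi.single j Complex.I) = B j := by
      rw [hTsingleA]; simp
    have h2 : (-(Pi.single j Complex.I) : Fin mm → ℂ) = Pi.single j (-Complex.I) := by
      funext k
      simp only [Pi.neg_apply, Pi.single_apply]
      split_ifs <;> simp
    have h0 := hfT (0, Pi.single j Complex.I)
    rw [h1] at h0
    rw [h0]
    show T (0, -(Pi.single j Complex.I)) = -(B j)
    rw [h2, hTsingleA]
    simp
  have hcont : ∀ x, Continuous fun t => γ t x := by
    intro x
    have : (fun t => γ t x) = fun t => TE ((TE.symm x).1, fun j => z t * (TE.symm x).2 j) := by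
      funext t
      rw [hγapp, hρapp]
    rw [this]
    have hTEc : Continuous TE := TE.toLinearMap.continuous_of_finiteDimensional
    apply hTEc.comp
    apply Continuous.prodMk continuous_const
    apply continuous_pi
    intro j
    apply Continuous.mul ?_ continuous_const
    apply Complex.continuous_exp.comp
    apply Continuous.mul ?_ continuous_const
    exact Complex.continuous_ofReal.comp (continuous_const.mul continuous_id)
  exact ⟨f, ⟨hQγ 1, γ, hQγ, hγ0, rfl, hcont⟩, hfP, hfA, hfB, hnd⟩

end WingAux


set_option maxHeartbeats 2000000 in
/-- `d` odd.  Given a coherent (SO⁺-equivariant) assignment of positive wings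
`W V = { v + c • e : v ∈ V, c ≥ 0 }` (with `e ∈ V^⊥_Q \ V` determined by the chosen
orientations) to all maximal totally isotropic subspaces `V`, the positive wings supported
by any two transversal maximal totally isotropic subspaces intersect trivially. -/
theorem positive_wings_disjoint_odd (d : ℕ) (hd : Odd d)
    (Q : QuadraticForm ℝ (Fin (2 * d + 1) → ℝ))
    (S T : Submodule ℝ (Fin (2 * d + 1) → ℝ))
    (hST : IsCompl S T)
    (hSdim : finrank ℝ S = d + 1) (hTdim : finrank ℝ T = d)
    (hSpos : ∀ x ∈ S, x ≠ 0 → 0 < Q x)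
    (hTneg : ∀ x ∈ T, x ≠ 0 → Q x < 0)
    (hQdec : ∀ x, Q x = Q ((S.linearProjOfIsCompl T hST x : Fin (2 * d + 1) → ℝ))
        + Q ((T.linearProjOfIsCompl S hST.symm x : Fin (2 * d + 1) → ℝ)))
    (W : Submodule ℝ (Fin (2 * d + 1) → ℝ) → Set (Fin (2 * d + 1) → ℝ))
    (hWform : ∀ V : Submodule ℝ (Fin (2 * d + 1) → ℝ),
      (∀ x ∈ V, Q x = 0) → finrank ℝ V = d →
      ∃ e, e ∈ LinearMap.BilinForm.orthogonal Q.polarBilin V ∧ e ∉ V ∧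
        W V = {y | ∃ v ∈ V, ∃ c : ℝ, 0 ≤ c ∧ y = v + c • e})
    (hWequiv : ∀ f : (Fin (2 * d + 1) → ℝ) ≃ₗ[ℝ] (Fin (2 * d + 1) → ℝ), InSOplus Q f →
      ∀ V : Submodule ℝ (Fin (2 * d + 1) → ℝ), (∀ x ∈ V, Q x = 0) → finrank ℝ V = d →
        W (V.map (f : (Fin (2 * d + 1) → ℝ) →ₗ[ℝ] (Fin (2 * d + 1) → ℝ))) = f '' (W V))
    (Vlt Vgt : Submodule ℝ (Fin (2 * d + 1) → ℝ))
    (hlt : ∀ x ∈ Vlt, Q x = 0) (hltdim : finrank ℝ Vlt = d)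
    (hgt : ∀ x ∈ Vgt, Q x = 0) (hgtdim : finrank ℝ Vgt = d)
    (htrans : Vlt ⊓ Vgt = ⊥) :
    W Vlt ∩ W Vgt = {0} := by
  classical
  obtain ⟨k, hk⟩ := hd
  have hE : finrank ℝ (Fin (2*d+1) → ℝ) = 2*d+1 := by
    simp [Module.finrank_pi]
  -- isotropic subspaces are polar-isotropic
  have hisot : ∀ (V : Submodule ℝ (Fin (2*d+1) → ℝ)), (∀ x ∈ V, Q x = 0) →
      ∀ x ∈ V, ∀ y ∈ V, QuadraticMap.polar Q x y = 0 := by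
    intro V hV x hx y hy
    rw [QuadraticMap.polar, hV _ (add_mem hx hy), hV _ hx, hV _ hy]
    ring
  -- no isotropic vector polar-orthogonal to a d-dim isotropic space lies outside it
  have hmax : ∀ x, Q x = 0 → ∀ (V : Submodule ℝ (Fin (2*d+1) → ℝ)),
      (∀ y ∈ V, Q y = 0) → finrank ℝ V = d →
      (∀ y ∈ V, QuadraticMap.polar Q y x = 0) → x ∈ V := by
    intro x hQx V hViso hVdim hxorth
    by_contra hxV
    set U := V ⊔ Submodule.span ℝ {x} with hU
    have hUiso : ∀ u ∈ U, Q u = 0 := by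
      intro u hu
      rw [hU, Submodule.mem_sup] at hu
      obtain ⟨y, hy, z, hz, rfl⟩ := hu
      rw [Submodule.mem_span_singleton] at hz
      obtain ⟨t, rfl⟩ := hz
      have hps : Q (y + t • x) = Q y + Q (t • x) + QuadraticMap.polar Q y (t • x) := by
        rw [QuadraticMap.polar]; ring
      rw [hps, hViso y hy, QuadraticMap.polar_smul_right, QuadraticMap.map_smul, hQx,
        hxorth y hy]
      simp
    have hxne : x ≠ 0 := fun h => hxV (h ▸ V.zero_mem)
    have hinf : V ⊓ Submodule.span ℝ {x} = ⊥ := by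
      rw [Submodule.eq_bot_iff]
      intro y hy
      have hy1 : y ∈ V := hy.1
      have hy2 : y ∈ Submodule.span ℝ {x} := hy.2
      rw [Submodule.mem_span_singleton] at hy2
      obtain ⟨t, rfl⟩ := hy2
      rcases eq_or_ne t 0 with rfl | ht
      · simp
      · exact absurd (by
          have : x = t⁻¹ • (t • x) := by rw [smul_smul, inv_mul_cancel₀ ht, one_smul]
          rw [this]; exact Submodule.smul_mem V _ hy1) hxV
    have hUdim : finrank ℝ (U : Submodule ℝ (Fin (2*d+1) → ℝ)) = d + 1 := by
      have h1 := Submodule.finrank_sup_add_finrank_inf_eq V (Submodule.span ℝ {x})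
      rw [hinf, finrank_bot, hVdim, finrank_span_singleton hxne, ← hU] at h1
      omega
    have h3 := Submodule.finrank_sup_add_finrank_inf_eq U S
    rw [hUdim, hSdim] at h3
    have h4 : finrank ℝ (U ⊔ S : Submodule ℝ (Fin (2*d+1) → ℝ)) ≤ 2*d+1 :=
      le_trans (Submodule.finrank_le _) (le_of_eq hE)
    have h5 : 0 < finrank ℝ (U ⊓ S : Submodule ℝ (Fin (2*d+1) → ℝ)) := by omega
    have : Nontrivial (U ⊓ S : Submodule ℝ (Fin (2*d+1) → ℝ)) := finrank_pos_iff.mp h5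
    obtain ⟨⟨y, hy⟩, hyne⟩ := exists_ne (0 : (U ⊓ S : Submodule ℝ (Fin (2*d+1) → ℝ)))
    have hyne' : y ≠ 0 := fun h => hyne (Subtype.ext h)
    have := hSpos y hy.2 hyne'
    rw [hUiso y hy.1] at this
    exact lt_irrefl 0 this
  -- basis of Vlt
  set vb : Basis (Fin d) ℝ Vlt := Module.finBasisOfFinrankEq ℝ Vlt hltdim with hvb
  set v : Fin d → (Fin (2*d+1) → ℝ) := fun i => (vb i : Fin (2*d+1) → ℝ) with hvdef
  have hv_mem : ∀ i, v i ∈ Vlt := fun i => (vb i).2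
  have hv_span : Submodule.span ℝ (Set.range v) = Vlt := by
    have h1 : Submodule.map Vlt.subtype (Submodule.span ℝ (Set.range vb))
        = Submodule.span ℝ (Set.range v) := by
      rw [Submodule.map_span]
      congr 1
      rw [← Set.range_comp]
      rfl
    rw [vb.span_eq, Submodule.map_subtype_top] at h1
    exact h1.symm
  -- every vector polar-orthogonal to all v i is polar-orthogonal to Vlt
  have hv_orth : ∀ x : Fin (2*d+1) → ℝ, (∀ i, QuadraticMap.polar Q (v i) x = 0) →
      ∀ y ∈ Vlt, QuadraticMap.polar Q y x = 0 := by
    intro x hx y hy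
    rw [← hv_span] at hy
    induction hy using Submodule.span_induction with
    | mem z hz => obtain ⟨i, rfl⟩ := hz; exact hx i
    | zero => rw [QuadraticMap.polar]; simp
    | add y z _ _ hy hz => rw [QuadraticMap.polar_add_left, hy, hz, add_zero]
    | smul t y _ hy => rw [QuadraticMap.polar_smul_left, hy, smul_zero]
  -- dual family in Vgt
  set ψ : Vgt →ₗ[ℝ] (Fin d → ℝ) :=
    LinearMap.pi (fun i => (Q.polarBilin (v i)).comp Vgt.subtype) with hψ
  have hψapp : ∀ (u : Vgt) i, ψ u i = QuadraticMap.polar Q (v i) (u : Fin (2*d+1) → ℝ) :=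
    fun u i => rfl
  have hψker : ∀ u : Vgt, ψ u = 0 → u = 0 := by
    intro u hu
    have horth : ∀ y ∈ Vlt, QuadraticMap.polar Q y (u : Fin (2*d+1) → ℝ) = 0 :=
      hv_orth _ (fun i => by rw [← hψapp, hu]; rfl)
    have hmem : (u : Fin (2*d+1) → ℝ) ∈ Vlt :=
      hmax _ (hgt _ u.2) Vlt hlt hltdim horth
    have : (u : Fin (2*d+1) → ℝ) ∈ Vlt ⊓ Vgt := ⟨hmem, u.2⟩
    rw [htrans, Submodule.mem_bot] at this
    exact Subtype.ext this
  have hψinj : Function.Injective ψ := by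
    intro a b hab
    have : ψ (a - b) = 0 := by rw [map_sub, hab, sub_self]
    have := hψker _ this
    rwa [sub_eq_zero] at this
  have hψsurj : Function.Surjective ψ := by
    have hfr : finrank ℝ Vgt = finrank ℝ (Fin d → ℝ) := by
      rw [hgtdim]; simp [Module.finrank_pi]
    exact (LinearMap.injective_iff_surjective_of_finrank_eq_finrank hfr).mp hψinj
  choose wfun hwfun using fun j => hψsurj (Pi.single j 1)
  set w : Fin d → (Fin (2*d+1) → ℝ) := fun j => (wfun j : Fin (2*d+1) → ℝ) with hwdef
  have hw_mem : ∀ j, w j ∈ Vgt := fun j => (wfun j).2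
  have hvw : ∀ i j, QuadraticMap.polar Q (v i) (w j) = if i = j then 1 else 0 := by
    intro i j
    have h1 := congrFun (hwfun j) i
    rw [hψapp] at h1
    rw [h1, Pi.single_apply]
  have hw_span : Submodule.span ℝ (Set.range w) = Vgt := by
    set ψe : Vgt ≃ₗ[ℝ] (Fin d → ℝ) := LinearEquiv.ofBijective ψ ⟨hψinj, hψsurj⟩ with hψe
    set wb : Basis (Fin d) ℝ Vgt := (Pi.basisFun ℝ (Fin d)).map ψe.symm with hwb
    have hwbj : ∀ j, (wb j : Fin (2*d+1) → ℝ) = w j := by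
      intro j
      rw [hwb, Basis.map_apply]
      have : ψe.symm (Pi.basisFun ℝ (Fin d) j) = wfun j := by
        apply ψe.injective
        rw [LinearEquiv.apply_symm_apply]
        have : ψe (wfun j) = ψ (wfun j) := rfl
        rw [this, hwfun]
        ext i
        simp [Pi.basisFun_apply]
      rw [this, hwdef]
    have h1 : Submodule.map Vgt.subtype (Submodule.span ℝ (Set.range wb))
        = Submodule.span ℝ (Set.range w) := by
      rw [Submodule.map_span]
      congr 1
      rw [← Set.range_comp]
      exact congrArg Set.range (funext hwbj)
    rw [wb.span_eq, Submodule.map_subtype_top] at h1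
    exact h1.symm
  have hw_orth : ∀ x : Fin (2*d+1) → ℝ, (∀ i, QuadraticMap.polar Q (w i) x = 0) →
      ∀ y ∈ Vgt, QuadraticMap.polar Q y x = 0 := by
    intro x hx y hy
    rw [← hw_span] at hy
    induction hy using Submodule.span_induction with
    | mem z hz => obtain ⟨i, rfl⟩ := hz; exact hx i
    | zero => rw [QuadraticMap.polar]; simp
    | add y z _ _ hy hz => rw [QuadraticMap.polar_add_left, hy, hz, add_zero]
    | smul t y _ hy => rw [QuadraticMap.polar_smul_left, hy, smul_zero]
  -- a common polar-orthogonal vector e₀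
  set χ : (Fin (2*d+1) → ℝ) →ₗ[ℝ] (Fin d → ℝ) × (Fin d → ℝ) :=
    LinearMap.prod (LinearMap.pi fun i => Q.polarBilin (v i))
      (LinearMap.pi fun i => Q.polarBilin (w i)) with hχ
  obtain ⟨e₀, he₀ne, he₀χ⟩ : ∃ e₀ : Fin (2*d+1) → ℝ, e₀ ≠ 0 ∧ χ e₀ = 0 := by
    have h1 := LinearMap.finrank_range_add_finrank_ker χ
    have h2 : finrank ℝ (LinearMap.range χ) ≤ 2*d := by
      refine le_trans (Submodule.finrank_le _) ?_
      rw [Module.finrank_prod]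
      simp [Module.finrank_pi]
      omega
    rw [hE] at h1
    have h3 : 0 < finrank ℝ (LinearMap.ker χ) := by omega
    have : Nontrivial (LinearMap.ker χ) := finrank_pos_iff.mp h3
    obtain ⟨⟨y, hy⟩, hyne⟩ := exists_ne (0 : LinearMap.ker χ)
    exact ⟨y, fun h => hyne (Subtype.ext h), hy⟩
  have he₀v : ∀ i, QuadraticMap.polar Q (v i) e₀ = 0 := by
    intro i
    have h1 : (χ e₀).1 i = 0 := by rw [he₀χ]; rfl
    exact h1
  have he₀w : ∀ i, QuadraticMap.polar Q (w i) e₀ = 0 := by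
    intro i
    have h1 : (χ e₀).2 i = 0 := by rw [he₀χ]; rfl
    exact h1
  have he₀lt : ∀ y ∈ Vlt, QuadraticMap.polar Q y e₀ = 0 := hv_orth e₀ he₀v
  have he₀gt : ∀ y ∈ Vgt, QuadraticMap.polar Q y e₀ = 0 := hw_orth e₀ he₀w
  have hq : Q e₀ ≠ 0 := by
    intro h0
    have h1 : e₀ ∈ Vlt := hmax e₀ h0 Vlt hlt hltdim he₀lt
    have h2 : e₀ ∈ Vgt := hmax e₀ h0 Vgt hgt hgtdim he₀gt
    have : e₀ ∈ Vlt ⊓ Vgt := ⟨h1, h2⟩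
    rw [htrans, Submodule.mem_bot] at this
    exact he₀ne this
  -- normalize
  set σ : ℝ := if 0 < Q e₀ then 1 else -1 with hσdef
  have hσ : σ ≠ 0 := by
    rw [hσdef]; split_ifs <;> norm_num
  set e : Fin (2*d+1) → ℝ := (Real.sqrt |Q e₀|)⁻¹ • e₀ with hedef
  have hQe : Q e = σ := by
    rw [hedef, QuadraticMap.map_smul]
    have hs : Real.sqrt |Q e₀| * Real.sqrt |Q e₀| = |Q e₀| := Real.mul_self_sqrt (abs_nonneg _)
    rw [← mul_inv, hs, hσdef]
    rcases lt_or_gt_of_ne hq with hneg | hpos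
    · rw [if_neg (by linarith), abs_of_neg hneg, inv_neg, smul_eq_mul, neg_mul,
        inv_mul_cancel₀ hq]
    · rw [if_pos hpos, abs_of_pos hpos, smul_eq_mul, inv_mul_cancel₀ hq]
  have helt : ∀ y ∈ Vlt, QuadraticMap.polar Q y e = 0 := by
    intro y hy
    rw [hedef, QuadraticMap.polar_smul_right, he₀lt y hy, smul_zero]
  have hegt : ∀ y ∈ Vgt, QuadraticMap.polar Q y e = 0 := by
    intro y hy
    rw [hedef, QuadraticMap.polar_smul_right, he₀gt y hy, smul_zero]
  have hee : QuadraticMap.polar Q e e = 2 * σ := by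
    rw [QuadraticMap.polar_self, hQe, two_smul]
    ring
  -- basic polar values
  have hvv : ∀ i j, QuadraticMap.polar Q (v i) (v j) = 0 :=
    fun i j => hisot Vlt hlt _ (hv_mem i) _ (hv_mem j)
  have hww : ∀ i j, QuadraticMap.polar Q (w i) (w j) = 0 :=
    fun i j => hisot Vgt hgt _ (hw_mem i) _ (hw_mem j)
  have hwv : ∀ i j, QuadraticMap.polar Q (w i) (v j) = if j = i then 1 else 0 := by
    intro i j
    rw [QuadraticMap.polar_comm, hvw]
  have hve : ∀ i, QuadraticMap.polar Q (v i) e = 0 := fun i => helt _ (hv_mem i)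
  have hwe : ∀ i, QuadraticMap.polar Q (w i) e = 0 := fun i => hegt _ (hw_mem i)
  -- the rotated families
  set m : ℕ := k + 1 with hmdef
  set g : Fin d → (Fin (2*d+1) → ℝ) := fun i => v i + σ • w i with hgdef
  set Pv : Fin d → (Fin (2*d+1) → ℝ) := fun i => v i - σ • w i with hPvdef
  set Af : Fin m → (Fin (2*d+1) → ℝ) :=
    fun j => if h : 2 * (j:ℕ) < d then g ⟨2*(j:ℕ), h⟩ else e with hAfdef
  set Bf : Fin m → (Fin (2*d+1) → ℝ) :=
    fun j => if h : 2 * (j:ℕ) + 1 < d then g ⟨2*(j:ℕ)+1, h⟩ else e with hBfdef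
  have hgg : ∀ i j, QuadraticMap.polar Q (g i) (g j) = if i = j then 2*σ else 0 := by
    intro i j
    rw [hgdef]
    simp only [QuadraticMap.polar_add_left, QuadraticMap.polar_add_right,
      QuadraticMap.polar_smul_left, QuadraticMap.polar_smul_right, smul_eq_mul,
      hvv, hww, hvw, hwv]
    by_cases h : i = j
    · subst h; simp; ring
    · simp [h, Ne.symm h]
  have hPP' : ∀ i j, QuadraticMap.polar Q (Pv i) (Pv j) = if i = j then -(2*σ) else 0 := by
    intro i j
    rw [hPvdef]
    simp only [QuadraticMap.polar_sub_left, QuadraticMap.polar_sub_right,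
      QuadraticMap.polar_smul_left, QuadraticMap.polar_smul_right, smul_eq_mul,
      hvv, hww, hvw, hwv]
    by_cases h : i = j
    · subst h; simp; ring
    · simp [h, Ne.symm h]
  have hPg : ∀ i j, QuadraticMap.polar Q (Pv i) (g j) = 0 := by
    intro i j
    rw [hPvdef, hgdef]
    simp only [QuadraticMap.polar_sub_left, QuadraticMap.polar_add_right,
      QuadraticMap.polar_smul_left, QuadraticMap.polar_smul_right, smul_eq_mul,
      hvv, hww, hvw, hwv]
    by_cases h : i = j
    · subst h; simp
    · simp [h, Ne.symm h]
  have hge : ∀ i, QuadraticMap.polar Q (g i) e = 0 := by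
    intro i
    rw [hgdef]
    simp only [QuadraticMap.polar_add_left, QuadraticMap.polar_smul_left, hve, hwe,
      smul_eq_mul]
    ring
  have heg : ∀ i, QuadraticMap.polar Q e (g i) = 0 := by
    intro i
    rw [QuadraticMap.polar_comm]
    exact hge i
  have hPe : ∀ i, QuadraticMap.polar Q (Pv i) e = 0 := by
    intro i
    rw [hPvdef]
    simp only [QuadraticMap.polar_sub_left, QuadraticMap.polar_smul_left, hve, hwe,
      smul_eq_mul]
    ring
  -- dite simplifications
  have hAg : ∀ j : Fin m, Af j = g ⟨2*(j:ℕ), by omega⟩ := by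
    intro j
    have hj : 2*(j:ℕ) < d := by omega
    rw [hAfdef]
    exact dif_pos hj
  have hB1 : ∀ (j : Fin m) (h : 2*(j:ℕ)+1 < d), Bf j = g ⟨2*(j:ℕ)+1, h⟩ := by
    intro j h
    rw [hBfdef]
    exact dif_pos h
  have hB2 : ∀ (j : Fin m), ¬(2*(j:ℕ)+1 < d) → Bf j = e := by
    intro j h
    rw [hBfdef]
    exact dif_neg h
  have hAA' : ∀ i j : Fin m, QuadraticMap.polar Q (Af i) (Af j) = if i = j then 2*σ else 0 := by
    intro i j
    rw [hAg i, hAg j, hgg]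
    by_cases h : i = j
    · subst h; simp
    · rw [if_neg (by
        intro hh
        apply h
        have := congrArg Fin.val hh
        simp only at this
        exact Fin.ext (by omega)), if_neg h]
  have hBB' : ∀ i j : Fin m, QuadraticMap.polar Q (Bf i) (Bf j) = if i = j then 2*σ else 0 := by
    intro i j
    by_cases hi : 2*(i:ℕ)+1 < d
    · by_cases hj : 2*(j:ℕ)+1 < d
      · rw [hB1 i hi, hB1 j hj, hgg]
        by_cases h : i = j
        · subst h; simp
        · rw [if_neg (by
            intro hh
            apply h
            have := congrArg Fin.val hh
            simp only at this
            exact Fin.ext (by omega)), if_neg h]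
      · rw [hB1 i hi, hB2 j hj, hge]
        rw [if_neg (by
          intro hh
          subst hh
          exact hj hi)]
    · by_cases hj : 2*(j:ℕ)+1 < d
      · rw [hB2 i hi, hB1 j hj, heg]
        rw [if_neg (by
          intro hh
          subst hh
          exact hi hj)]
      · have hij : i = j := Fin.ext (by omega)
        rw [hB2 i hi, hB2 j hj, hee, if_pos hij]
  have hAB' : ∀ i j : Fin m, QuadraticMap.polar Q (Af i) (Bf j) = 0 := by
    intro i j
    rw [hAg i]
    by_cases hj : 2*(j:ℕ)+1 < d
    · rw [hB1 j hj, hgg, if_neg (by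
        intro hh
        have := congrArg Fin.val hh
        simp only at this
        omega)]
    · rw [hB2 j hj]
      exact hge _
  have hPA' : ∀ (i : Fin d) (j : Fin m), QuadraticMap.polar Q (Pv i) (Af j) = 0 := by
    intro i j
    rw [hAg j]
    exact hPg i _
  have hPB' : ∀ (i : Fin d) (j : Fin m), QuadraticMap.polar Q (Pv i) (Bf j) = 0 := by
    intro i j
    by_cases hj : 2*(j:ℕ)+1 < d
    · rw [hB1 j hj]
      exact hPg i _
    · rw [hB2 j hj]
      exact hPe i
  have hn : 2*d+1 = d + 2*m := by omega
  obtain ⟨f, hfSO, hfP, hfA, hfB, hnd⟩ :=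
    WingAux.exists_soplus hn Q σ hσ Pv Af Bf hPP' hAA' hBB' hAB' hPA' hPB'
  -- action of f on the original data
  have hfg : ∀ i : Fin d, f (g i) = -(g i) := by
    intro i
    rcases Nat.even_or_odd (i:ℕ) with ⟨c, hc⟩ | ⟨c, hc⟩
    · have hcm : c < m := by omega
      have hgi : Af ⟨c, hcm⟩ = g i := by
        rw [hAg ⟨c, hcm⟩]
        exact congrArg g (by
          apply Fin.ext
          show 2*c = (i:ℕ)
          omega)
      rw [← hgi, hfA, hgi]
    · have hcm : c < m := by omega
      have hj : 2*((⟨c, hcm⟩ : Fin m):ℕ)+1 < d := show 2*c+1 < d by omega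
      have hgi : Bf ⟨c, hcm⟩ = g i := by
        rw [hB1 ⟨c, hcm⟩ hj]
        exact congrArg g (by
          apply Fin.ext
          show 2*c+1 = (i:ℕ)
          omega)
      rw [← hgi, hfB, hgi]
  have hfv : ∀ i, f (v i) = (-σ) • w i := by
    intro i
    have h2 : Pv i + g i = (2:ℝ) • v i := by
      rw [hPvdef, hgdef]
      module
    have h3 : f ((2:ℝ) • v i) = Pv i - g i := by
      rw [← h2, map_add, hfP, hfg]
      abel
    have h4 : Pv i - g i = (2:ℝ) • ((-σ) • w i) := by
      rw [hPvdef, hgdef]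
      module
    have h5 : (2:ℝ) • f (v i) = (2:ℝ) • ((-σ) • w i) := by
      rw [← map_smul, h3, h4]
    exact smul_right_injective _ two_ne_zero h5
  have hfe : f e = -e := by
    have hk' : ¬(2*((⟨k, by omega⟩ : Fin m):ℕ)+1 < d) := show ¬(2*k+1 < d) by omega
    have hBe : Bf ⟨k, by omega⟩ = e := hB2 _ hk'
    rw [← hBe, hfB, hBe]
  -- f maps Vlt onto Vgt
  have hmap : Vlt.map (f : (Fin (2*d+1) → ℝ) →ₗ[ℝ] (Fin (2*d+1) → ℝ)) = Vgt := by
    rw [← hv_span, Submodule.map_span]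
    have himg : (f : (Fin (2*d+1) → ℝ) →ₗ[ℝ] (Fin (2*d+1) → ℝ)) '' Set.range v
        = Set.range (fun i => (-σ) • w i) := by
      rw [← Set.range_comp]
      apply congrArg Set.range
      funext i
      exact hfv i
    rw [himg]
    apply le_antisymm
    · rw [Submodule.span_le]
      rintro x ⟨i, rfl⟩
      exact Submodule.smul_mem _ _ (hw_mem i)
    · rw [← hw_span, Submodule.span_le]
      rintro x ⟨i, rfl⟩
      have hwi : w i = (-σ)⁻¹ • ((-σ) • w i) := by
        rw [smul_smul, inv_mul_cancel₀ (neg_ne_zero.mpr hσ), one_smul]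
      rw [hwi]
      exact Submodule.smul_mem _ _ (Submodule.subset_span ⟨i, rfl⟩)
  -- orthogonal complements of the two isotropic spaces
  have hrefl : Q.polarBilin.IsRefl := by
    intro x y h
    rw [QuadraticMap.polarBilin_apply_apply] at h ⊢
    rwa [QuadraticMap.polar_comm]
  have hene : e ≠ 0 := by
    intro h
    apply hσ
    rw [← hQe, h, map_zero]
  have henlt : e ∉ Vlt := by
    intro hmem
    exact hσ (by rw [← hQe]; exact hlt e hmem)
  have hengt : e ∉ Vgt := by
    intro hmem
    exact hσ (by rw [← hQe]; exact hgt e hmem)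
  have horth : ∀ (V : Submodule ℝ (Fin (2*d+1) → ℝ)), (∀ x ∈ V, Q x = 0) →
      finrank ℝ V = d → e ∉ V → (∀ y ∈ V, QuadraticMap.polar Q y e = 0) →
      LinearMap.BilinForm.orthogonal Q.polarBilin V = V ⊔ Submodule.span ℝ {e} := by
    intro V hViso hVdim heV heo
    have hle : V ⊔ Submodule.span ℝ {e} ≤ LinearMap.BilinForm.orthogonal Q.polarBilin V := by
      apply sup_le
      · intro x hx
        rw [LinearMap.BilinForm.mem_orthogonal_iff]
        intro nn hn
        show Q.polarBilin nn x = 0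
        rw [QuadraticMap.polarBilin_apply_apply]
        exact hisot V hViso _ hn _ hx
      · rw [Submodule.span_le]
        intro x hx
        rw [Set.mem_singleton_iff] at hx
        subst hx
        rw [SetLike.mem_coe, LinearMap.BilinForm.mem_orthogonal_iff]
        intro nn hn
        show Q.polarBilin nn e = 0
        rw [QuadraticMap.polarBilin_apply_apply]
        exact heo _ hn
    have hinf : V ⊓ Submodule.span ℝ {e} = ⊥ := by
      rw [Submodule.eq_bot_iff]
      intro y hy
      have hy1 : y ∈ V := hy.1
      have hy2 : y ∈ Submodule.span ℝ {e} := hy.2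
      rw [Submodule.mem_span_singleton] at hy2
      obtain ⟨t, rfl⟩ := hy2
      rcases eq_or_ne t 0 with rfl | ht
      · simp
      · exact absurd (by
          have : e = t⁻¹ • (t • e) := by rw [smul_smul, inv_mul_cancel₀ ht, one_smul]
          rw [this]; exact Submodule.smul_mem V _ hy1) heV
    have hd1 : finrank ℝ (V ⊔ Submodule.span ℝ {e} : Submodule ℝ (Fin (2*d+1) → ℝ)) = d+1 := by
      have h1 := Submodule.finrank_sup_add_finrank_inf_eq V (Submodule.span ℝ {e})
      rw [hinf, finrank_bot, hVdim, finrank_span_singleton hene] at h1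
      omega
    have hd2 : finrank ℝ (LinearMap.BilinForm.orthogonal Q.polarBilin V) = d+1 := by
      rw [LinearMap.BilinForm.finrank_orthogonal hnd, hE, hVdim]
      omega
    exact (Submodule.eq_of_le_of_finrank_le hle (by rw [hd1, hd2])).symm
  have horthlt := horth Vlt hlt hltdim henlt helt
  have horthgt := horth Vgt hgt hgtdim hengt hegt
  -- coefficient extraction
  have hcoef_gt : ∀ t : ℝ, t • e ∈ Vgt → t = 0 := by
    intro t ht
    by_contra h
    apply hengt
    have : e = t⁻¹ • (t • e) := by rw [smul_smul, inv_mul_cancel₀ h, one_smul]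
    rw [this]
    exact Submodule.smul_mem Vgt _ ht
  have hcoef_sup : ∀ t : ℝ, t • e ∈ Vlt ⊔ Vgt → t = 0 := by
    intro t ht
    by_contra h
    have he_mem : e ∈ Vlt ⊔ Vgt := by
      have : e = t⁻¹ • (t • e) := by rw [smul_smul, inv_mul_cancel₀ h, one_smul]
      rw [this]
      exact Submodule.smul_mem _ _ ht
    obtain ⟨y, hy, z, hz, hyz⟩ := Submodule.mem_sup.mp he_mem
    have h2 : QuadraticMap.polar Q e (y + z) = 0 := by
      rw [QuadraticMap.polar_add_right, QuadraticMap.polar_comm _ e y,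
        QuadraticMap.polar_comm _ e z, helt _ hy, hegt _ hz, add_zero]
    rw [hyz, hee] at h2
    exact hσ (by linarith)
  -- the wings
  obtain ⟨elt, heltO, heltN, hWlt⟩ := hWform Vlt hlt hltdim
  obtain ⟨egt, hegtO, hegtN, hWgt⟩ := hWform Vgt hgt hgtdim
  rw [horthlt] at heltO
  obtain ⟨u₁, hu₁, s₁, hs₁, helt_eq⟩ := Submodule.mem_sup.mp heltO
  obtain ⟨a, rfl⟩ := Submodule.mem_span_singleton.mp hs₁
  have ha : a ≠ 0 := by
    intro h
    apply heltN
    rw [← helt_eq, h, zero_smul, add_zero]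
    exact hu₁
  rw [horthgt] at hegtO
  obtain ⟨u₂, hu₂, s₂, hs₂, hegt_eq⟩ := Submodule.mem_sup.mp hegtO
  obtain ⟨b, rfl⟩ := Submodule.mem_span_singleton.mp hs₂
  have hb : b ≠ 0 := by
    intro h
    apply hegtN
    rw [← hegt_eq, h, zero_smul, add_zero]
    exact hu₂
  -- equivariance
  have hWgt_img : W Vgt = ⇑f '' W Vlt := by
    rw [← hmap]
    exact hWequiv f hfSO Vlt hlt hltdim
  have hfu₁ : f u₁ ∈ Vgt := by
    rw [← hmap]
    exact ⟨u₁, hu₁, rfl⟩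
  have hegt_mem : egt ∈ W Vgt := by
    rw [hWgt]
    exact ⟨0, Vgt.zero_mem, 1, zero_le_one, by simp⟩
  rw [hWgt_img] at hegt_mem
  obtain ⟨x₀, hx₀, hx₀eq⟩ := hegt_mem
  rw [hWlt] at hx₀
  obtain ⟨v₀, hv₀, c', hc', rfl⟩ := hx₀
  have hfv₀ : f v₀ ∈ Vgt := by
    rw [← hmap]
    exact ⟨v₀, hv₀, rfl⟩
  have h2 : f v₀ + c' • (f u₁ + a • -e) = u₂ + b • e := by
    have h1 : f (v₀ + c' • elt) = f v₀ + c' • (f u₁ + a • f e) := by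
      rw [map_add, map_smul, ← helt_eq, map_add, map_smul]
    rw [hfe] at h1
    rw [← h1, hx₀eq, ← hegt_eq]
  have hkey : (b + c' * a) • e = (f v₀ + c' • f u₁) - u₂ := by
    linear_combination (norm := module) -h2
  have hba : b + c' * a = 0 := by
    apply hcoef_gt
    rw [hkey]
    exact Submodule.sub_mem _ (Submodule.add_mem _ hfv₀ (Submodule.smul_mem _ _ hfu₁)) hu₂
  have hc'pos : 0 < c' := by
    rcases lt_or_eq_of_le hc' with h | h
    · exact h
    · exfalso; apply hb; rw [← h] at hba; linarith
  have habneg : a * b < 0 := by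
    have hb_eq : b = -(c' * a) := by linarith
    have h4 : a * b = -(c' * (a * a)) := by rw [hb_eq]; ring
    have h5 : 0 < c' * (a * a) := mul_pos hc'pos (mul_self_pos.mpr ha)
    linarith
  -- final computation
  ext x
  simp only [Set.mem_inter_iff, Set.mem_singleton_iff]
  constructor
  · rintro ⟨hx1, hx2⟩
    rw [hWlt] at hx1
    rw [hWgt] at hx2
    obtain ⟨v₁, hv₁, c₁, hc₁, hx1eq⟩ := hx1
    obtain ⟨v₂, hv₂, c₂, hc₂, hx2eq⟩ := hx2
    have h0 : v₁ + c₁ • (u₁ + a • e) = v₂ + c₂ • (u₂ + b • e) := by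
      rw [helt_eq, hegt_eq, ← hx1eq, ← hx2eq]
    have hkey2 : (c₁ * a - c₂ * b) • e = (v₂ + c₂ • u₂) - (v₁ + c₁ • u₁) := by
      linear_combination (norm := module) h0
    have hc0 : c₁ * a - c₂ * b = 0 := by
      apply hcoef_sup
      rw [hkey2]
      apply Submodule.sub_mem
      · exact Submodule.mem_sup_right (add_mem hv₂ (Submodule.smul_mem _ _ hu₂))
      · exact Submodule.mem_sup_left (add_mem hv₁ (Submodule.smul_mem _ _ hu₁))
    have hca : c₁ * a = c₂ * b := by linarith
    have hc₁a : c₁ * a = 0 := by nlinarith [mul_nonneg hc₁ hc₂, mul_self_nonneg (c₁ * a)]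
    have hc₁0 : c₁ = 0 := (mul_eq_zero.mp hc₁a).resolve_right ha
    have hc₂b : c₂ * b = 0 := by rw [← hca]; exact hc₁a
    have hc₂0 : c₂ = 0 := (mul_eq_zero.mp hc₂b).resolve_right hb
    have hxl : x ∈ Vlt := by
      rw [hx1eq, hc₁0, zero_smul, add_zero]
      exact hv₁
    have hxg : x ∈ Vgt := by
      rw [hx2eq, hc₂0, zero_smul, add_zero]
      exact hv₂
    have hmem : x ∈ Vlt ⊓ Vgt := ⟨hxl, hxg⟩
    rw [htrans, Submodule.mem_bot] at hmem
    exact hmem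
  · rintro rfl
    constructor
    · rw [hWlt]
      exact ⟨0, Vlt.zero_mem, 0, le_refl 0, by simp⟩
    · rw [hWgt]
      exact ⟨0, Vgt.zero_mem, 0, le_refl 0, by simp⟩
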